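/- Let k be a field. Then UT_2(k) contains a free subsemigroup of rank 2 — that is, there exist A, B ∈ UT_2(k) such that the semigroup homomorphism from the free semigroup on two generators a, b to UT_2(k) sending a ↦ A and b ↦ B is injective — if and only if k is not locally finite, i.e., some finitely generated subfield of k is infinite. -/

import Mathlib

/-- The submonoid of upper triangular `n × n` matrices over `S`. -/
def UT (n : ℕ) (S : Type*) [CommSemiring S] : Submonoid (Matrix (Fin n) (Fin n) S) where
  carrier := {A | ∀ i j : Fin n, j < i → A i j = 0}
  one_mem' := fun i j hij => Matrix.one_apply_ne (ne_of_gt hij)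
  mul_mem' := by
    intro a b ha hb i j hij
    rw [Matrix.mul_apply]
    apply Finset.sum_eq_zero
    intro k _
    rcases lt_or_ge k i with h | h
    · rw [ha i k h, zero_mul]
    · rw [hb k j (lt_of_lt_of_le hij h), mul_zero]

namespace UT2Aux

open Matrix Polynomial

/-- The word underlying an element of a free semigroup. -/
def wlist {α : Type*} (w : FreeSemigroup α) : List α := w.head :: w.tail

lemma wlist_injective {α : Type*} : Function.Injective (wlist (α := α)) := by
  rintro ⟨a, l⟩ ⟨b, m⟩ h
  simp only [wlist, List.cons.injEq] at h
  simp [h.1, h.2]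

lemma wlist_of {α : Type*} (a : α) : wlist (FreeSemigroup.of a) = [a] := rfl

lemma wlist_mul {α : Type*} (x y : FreeSemigroup α) :
    wlist (x * y) = wlist x ++ wlist y := by
  simp [wlist, FreeSemigroup.head_mul, FreeSemigroup.tail_mul]

/-- An injection witnessing infiniteness of `FreeSemigroup Bool`. -/
instance : Infinite (FreeSemigroup Bool) := by
  apply Infinite.of_injective (fun n : ℕ => (⟨true, List.replicate n true⟩ : FreeSemigroup Bool))
  intro n m h
  have := congrArg (fun w : FreeSemigroup Bool => w.tail.length) h
  simpa using this

variable {k : Type*} [Field k]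

/-- Horner-style evaluation of a boolean word at `t`. -/
def Q (t : k) : List Bool → k
  | [] => 0
  | b :: l => (if b then 1 else 0) + t * Q t l

lemma Q_append (t : k) (l₁ l₂ : List Bool) :
    Q t (l₁ ++ l₂) = Q t l₁ + t ^ l₁.length * Q t l₂ := by
  induction l₁ with
  | nil => simp [Q]
  | cons b l ih => simp [Q, ih, pow_succ]; ring

/-- The matrix `!![a, b; 0, 1]`. -/
def M (a b : k) : Matrix (Fin 2) (Fin 2) k := !![a, b; 0, 1]

lemma M_mem (a b : k) : M a b ∈ UT 2 k := by
  intro i j hij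
  fin_cases i <;> fin_cases j <;> simp_all [M]

lemma M_mul (a b c d : k) : M a b * M c d = M (a * c) (a * d + b) := by
  simp [M, Matrix.mul_fin_two]

lemma M_inj {a b c d : k} (h : M a b = M c d) : a = c ∧ b = d := by
  constructor
  · have := congrFun (congrFun h 0) 0; simpa [M] using this
  · have := congrFun (congrFun h 0) 1; simpa [M] using this

/-- The generator matrices. -/
def gen (t : k) (b : Bool) : UT 2 k := ⟨M t (if b then 1 else 0), M_mem _ _⟩

lemma lift_val (t : k) (w : FreeSemigroup Bool) :
    ((FreeSemigroup.lift (fun x : Bool => if x then gen t true else gen t false) w : UT 2 k) :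
        Matrix (Fin 2) (Fin 2) k)
      = M (t ^ (wlist w).length) (Q t (wlist w)) := by
  induction w using FreeSemigroup.recOnMul with
  | ih1 b =>
      cases b <;> simp [gen, wlist_of, Q]
  | ih2 a y ha hy =>
      rw [_root_.map_mul, MulMemClass.coe_mul, ha, hy, M_mul, wlist_mul, Q_append,
        List.length_append, pow_add]
      congr 1
      ring

/-- Core construction: an element `t` with suitable injectivity properties yields a free
subsemigroup of rank 2. -/
lemma main (t : k) (H1 : ∀ n m : ℕ, t ^ n = t ^ m → n = m)
    (H2 : ∀ l l' : List Bool, l.length = l'.length → Q t l = Q t l' → l = l') :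
    ∃ A B : (UT 2 k),
      Function.Injective
        ⇑(FreeSemigroup.lift (fun x : Bool => if x then A else B) :
            FreeSemigroup Bool →ₙ* (UT 2 k)) := by
  refine ⟨gen t true, gen t false, ?_⟩
  intro x y h
  apply wlist_injective
  have h' : M (t ^ (wlist x).length) (Q t (wlist x))
      = M (t ^ (wlist y).length) (Q t (wlist y)) := by
    rw [← lift_val, ← lift_val, h]
  obtain ⟨h1, h2⟩ := M_inj h'
  exact H2 _ _ (H1 _ _ h1) h2

/-! ### The characteristic zero case -/

/-- Natural number Horner evaluation at 2. -/
def natQ : List Bool → ℕ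
  | [] => 0
  | b :: l => (if b then 1 else 0) + 2 * natQ l

lemma natQ_inj : ∀ l l' : List Bool, l.length = l'.length → natQ l = natQ l' → l = l' := by
  intro l
  induction l with
  | nil => intro l' hlen _; cases l' <;> simp_all
  | cons b l ih =>
      intro l' hlen hq
      cases l' with
      | nil => simp at hlen
      | cons b' l' =>
          simp only [natQ] at hq
          have hb : b = b' := by cases b <;> cases b' <;> simp_all <;> omega
          subst hb
          have : natQ l = natQ l' := by cases b <;> simp at hq <;> omega
          rw [ih l' (by simpa using hlen) this]

lemma Q_two_eq (l : List Bool) : Q (2 : k) l = (natQ l : k) := by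
  induction l with
  | nil => simp [Q, natQ]
  | cons b l ih => cases b <;> simp [Q, natQ, ih] <;> push_cast <;> ring

lemma char_zero_case [CharZero k] :
    ∃ A B : (UT 2 k),
      Function.Injective
        ⇑(FreeSemigroup.lift (fun x : Bool => if x then A else B) :
            FreeSemigroup Bool →ₙ* (UT 2 k)) := by
  apply main (2 : k)
  · intro n m h
    have : ((2 ^ n : ℕ) : k) = ((2 ^ m : ℕ) : k) := by push_cast; exact h
    exact Nat.pow_right_injective (le_refl 2) (Nat.cast_injective this)
  · intro l l' hlen hq
    rw [Q_two_eq, Q_two_eq] at hq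
    exact natQ_inj l l' hlen (Nat.cast_injective hq)

/-! ### The positive characteristic case -/

/-- Polynomial Horner evaluation. -/
noncomputable def Qpoly (R : Type*) [CommRing R] : List Bool → R[X]
  | [] => 0
  | b :: l => (if b then 1 else 0) + X * Qpoly R l

lemma Qpoly_inj (R : Type*) [CommRing R] [Nontrivial R] [NoZeroDivisors R] :
    ∀ l l' : List Bool, l.length = l'.length → Qpoly R l = Qpoly R l' → l = l' := by
  intro l
  induction l with
  | nil => intro l' hlen _; cases l' <;> simp_all
  | cons b l ih =>
      intro l' hlen hq
      cases l' with
      | nil => simp at hlen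
      | cons b' l' =>
          simp only [Qpoly] at hq
          have hc := congrArg (fun p : R[X] => p.coeff 0) hq
          simp only [Polynomial.coeff_add, Polynomial.mul_coeff_zero, Polynomial.coeff_X_zero,
            zero_mul, add_zero] at hc
          have hb : b = b' := by
            cases b <;> cases b' <;> simp_all
  -- note: `simp_all` uses `one_ne_zero`
          subst hb
          have hx : X * Qpoly R l = X * Qpoly R l' := by
            have := hq
            exact add_left_cancel this
          have : Qpoly R l = Qpoly R l' := mul_left_cancel₀ Polynomial.X_ne_zero hx
          rw [ih l' (by simpa using hlen) this]

lemma Q_eq_aeval (R : Type*) [CommRing R] [Algebra R k] (t : k) (l : List Bool) :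
    Q t l = Polynomial.aeval t (Qpoly R l) := by
  induction l with
  | nil => simp [Q, Qpoly]
  | cons b l ih => cases b <;> simp [Q, Qpoly, ih]

lemma transcendental_case {R : Type*} [CommRing R] [Nontrivial R] [NoZeroDivisors R]
    [Algebra R k] {t : k} (ht : Transcendental R t) :
    ∃ A B : (UT 2 k),
      Function.Injective
        ⇑(FreeSemigroup.lift (fun x : Bool => if x then A else B) :
            FreeSemigroup Bool →ₙ* (UT 2 k)) := by
  have hinj : Function.Injective (Polynomial.aeval t : R[X] →ₐ[R] k) :=
    transcendental_iff_injective.mp ht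
  apply main t
  · intro n m h
    have : Polynomial.aeval t ((X : R[X]) ^ n) = Polynomial.aeval t ((X : R[X]) ^ m) := by
      simpa using h
    have := hinj this
    have := congrArg Polynomial.natDegree this
    simpa using this
  · intro l l' hlen hq
    rw [Q_eq_aeval R, Q_eq_aeval R] at hq
    exact Qpoly_inj R l l' hlen (hinj hq)

end UT2Aux

open UT2Aux Polynomial in
/-- For a field `k`, `UT_2(k)` contains a free subsemigroup of rank 2
if and only if `k` is not locally finite, i.e. some finitely generated subfield of `k`
is infinite. -/
theorem UT2_free_subsemigroup_iff_not_locally_finite (k : Type*) [Field k] :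
    (∃ A B : (UT 2 k),
        Function.Injective
          ⇑(FreeSemigroup.lift (fun x : Bool => if x then A else B) :
              FreeSemigroup Bool →ₙ* (UT 2 k))) ↔
      ∃ s : Finset k, Infinite (Subfield.closure (s : Set k)) := by
  classical
  constructor
  · rintro ⟨A, B, hinj⟩
    set f : Bool → (UT 2 k) := fun x : Bool => if x then A else B with hf
    refine ⟨{(A : Matrix (Fin 2) (Fin 2) k) 0 0, (A : Matrix (Fin 2) (Fin 2) k) 0 1,
      (A : Matrix (Fin 2) (Fin 2) k) 1 0, (A : Matrix (Fin 2) (Fin 2) k) 1 1,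
      (B : Matrix (Fin 2) (Fin 2) k) 0 0, (B : Matrix (Fin 2) (Fin 2) k) 0 1,
      (B : Matrix (Fin 2) (Fin 2) k) 1 0, (B : Matrix (Fin 2) (Fin 2) k) 1 1}, ?_⟩
    set F := Subfield.closure
      (({(A : Matrix (Fin 2) (Fin 2) k) 0 0, (A : Matrix (Fin 2) (Fin 2) k) 0 1,
      (A : Matrix (Fin 2) (Fin 2) k) 1 0, (A : Matrix (Fin 2) (Fin 2) k) 1 1,
      (B : Matrix (Fin 2) (Fin 2) k) 0 0, (B : Matrix (Fin 2) (Fin 2) k) 0 1,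
      (B : Matrix (Fin 2) (Fin 2) k) 1 0, (B : Matrix (Fin 2) (Fin 2) k) 1 1} : Finset k) :
        Set k) with hF
    have hmem : ∀ w : FreeSemigroup Bool, ∀ i j : Fin 2,
        ((FreeSemigroup.lift f w : UT 2 k) : Matrix (Fin 2) (Fin 2) k) i j ∈ F := by
      intro w
      induction w using FreeSemigroup.recOnMul with
      | ih1 b =>
          intro i j
          apply Subfield.subset_closure
          cases b <;> simp only [FreeSemigroup.lift_of, hf] <;>
            fin_cases i <;> fin_cases j <;> simp
      | ih2 a y ha hy =>
          intro i j
          have hco : ((FreeSemigroup.lift f (FreeSemigroup.of a * y) : UT 2 k) :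
                Matrix (Fin 2) (Fin 2) k)
              = ((FreeSemigroup.lift f (FreeSemigroup.of a) : UT 2 k) :
                  Matrix (Fin 2) (Fin 2) k) *
                ((FreeSemigroup.lift f y : UT 2 k) : Matrix (Fin 2) (Fin 2) k) := by
            rw [_root_.map_mul]; rfl
          rw [hco, Matrix.mul_apply, Fin.sum_univ_two]
          exact add_mem (mul_mem (ha i 0) (hy 0 j)) (mul_mem (ha i 1) (hy 1 j))
    by_contra hfin
    rw [not_infinite_iff_finite] at hfin
    have hinj2 : Function.Injective (fun w : FreeSemigroup Bool =>
        (fun i j => (⟨((FreeSemigroup.lift f w : UT 2 k) : Matrix (Fin 2) (Fin 2) k) i j,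
          hmem w i j⟩ : F) : Matrix (Fin 2) (Fin 2) F)) := by
      intro x y h
      apply hinj
      apply Subtype.ext
      ext i j
      have := congrFun (congrFun h i) j
      exact Subtype.ext_iff.mp this
    haveI : Finite (Matrix (Fin 2) (Fin 2) F) := by
      unfold Matrix; infer_instance
    haveI := Finite.of_injective _ hinj2
    exact not_finite (FreeSemigroup Bool)
  · rintro ⟨s, hs⟩
    rcases eq_or_ne (ringChar k) 0 with h0 | hp
    · haveI : CharP k 0 := h0 ▸ ringChar.charP k
      haveI : CharZero k := CharP.charP_to_charZero k
      exact char_zero_case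
    · set p := ringChar k with hpdef
      haveI : CharP k p := ringChar.charP k
      haveI hprime : Fact p.Prime := ⟨(CharP.char_is_prime_or_zero k p).resolve_right hp⟩
      haveI : NeZero p := ⟨hp⟩
      letI : Algebra (ZMod p) k := ZMod.algebra k p
      obtain ⟨t, ht⟩ : ∃ t : k, Transcendental (ZMod p) t := by
        by_contra hall
        push_neg at hall
        simp only [Transcendental, not_not] at hall
        have hSfin : Finite (s : Set k) := s.finite_toSet
        haveI : FiniteDimensional (ZMod p) (IntermediateField.adjoin (ZMod p) (s : Set k)) :=
          IntermediateField.finiteDimensional_adjoin (fun x _ => (hall x).isIntegral)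
        haveI : Finite (IntermediateField.adjoin (ZMod p) (s : Set k)) :=
          Module.finite_of_finite (ZMod p)
        have hle : Subfield.closure (s : Set k) ≤
            (IntermediateField.adjoin (ZMod p) (s : Set k)).toSubfield :=
          Subfield.closure_le.mpr (IntermediateField.subset_adjoin _ _)
        have : Finite (Subfield.closure (s : Set k)) := by
          apply Finite.of_injective
            (fun x : Subfield.closure (s : Set k) =>
              (⟨x.1, hle x.2⟩ : IntermediateField.adjoin (ZMod p) (s : Set k)))
          intro a b h
          have hab := congrArg Subtype.val h
          exact Subtype.ext hab
        exact not_finite (Subfield.closure (s : Set k))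
      exact transcendental_case ht
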